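/- Let ρ ≤ λ be infinite cardinals. Then the Džamonja–Shelah number DS(ρ, λ) equals the meeting number m(ρ, λ). -/

import Mathlib

open Cardinal

noncomputable section

/-- The covering number `cov(ρ₁, ρ₂, ρ₃, ρ₄)`: least cardinality of `X ⊆ P_{ρ₂}(ρ₁)`
such that every `b ∈ P_{ρ₃}(ρ₁)` is covered by the union of fewer than `ρ₄` members of `X`. -/
def cov (r1 r2 r3 r4 : Cardinal) : Cardinal :=
  sInf { c | ∃ X : Set (Set r1.out),
    (∀ x ∈ X, #x < r2) ∧
    (∀ b : Set r1.out, #b < r3 → ∃ Q : Set (Set r1.out), Q ⊆ X ∧ #Q < r4 ∧ b ⊆ ⋃₀ Q) ∧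
    #X = c }

/-- The meeting number `m(ρ, λ)`. -/
def meet (ρ lam : Cardinal) : Cardinal :=
  sInf { c | ∃ Q : Set (Set lam.out),
    (∀ q ∈ Q, #q = ρ) ∧
    (∀ b : Set lam.out, #b = ρ → ∃ q ∈ Q, #(↥(b ∩ q)) = ρ) ∧
    #Q = c }

/-- The density number `d(ρ, λ)`. -/
def dens (ρ lam : Cardinal) : Cardinal :=
  sInf { c | ∃ Q : Set (Set lam.out),
    (∀ q ∈ Q, #q = ρ) ∧
    (∀ b : Set lam.out, #b = ρ → ∃ q ∈ Q, q ⊆ b) ∧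
    #Q = c }

/-- `ds(f)` for `f : λ → ρ`. -/
def ds (ρ lam : Cardinal) (f : lam.out → ρ.out) : Cardinal :=
  sInf { c | ∃ Z : Set (Set lam.out),
    (∀ z ∈ Z, #z = ρ) ∧
    (∀ B : Set lam.out, (∀ α : ρ.out, #(↥(B ∩ f ⁻¹' {α})) = lam) →
      ∃ z ∈ Z, #(↥(f '' (z ∩ B))) = ρ) ∧
    #Z = c }

/-- The Džamonja–Shelah number `DS(ρ, λ) = sup { ds(f) : f : λ → ρ }`. -/
def DS (ρ lam : Cardinal) : Cardinal := ⨆ f : lam.out → ρ.out, ds ρ lam f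

/-- Cofinality of a cardinal. -/
def cf (c : Cardinal) : Cardinal := c.ord.cof

/-- `u(σ, λ) = cov(λ, σ, σ, ω)`. -/
def u (σ lam : Cardinal) : Cardinal := cov lam σ σ ℵ₀

/-- The `o`-th iterated cardinal successor of `c`. -/
def succIter (c : Cardinal) (o : Ordinal) : Cardinal :=
  Cardinal.preAleph (Cardinal.preAleph.symm c + o)


lemma aux_sel (ρ lam : Cardinal) (hlam : ℵ₀ ≤ lam)
    (f : lam.out → ρ.out) (B : Set lam.out)
    (hB : ∀ α : ρ.out, #(↥(B ∩ f ⁻¹' {α})) = lam) :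
    ∃ z : Set lam.out, z ⊆ B ∧ #z = ρ ∧ Set.InjOn f z ∧ f '' z = Set.univ := by
  have hne : ∀ α : ρ.out, ∃ x, x ∈ B ∧ f x = α := by
    intro α
    have h0 : #(↥(B ∩ f ⁻¹' {α})) ≠ 0 := by
      rw [hB α]; exact (lt_of_lt_of_le aleph0_pos hlam).ne'
    rw [Cardinal.mk_ne_zero_iff] at h0
    obtain ⟨⟨x, hx⟩⟩ := h0
    exact ⟨x, hx.1, hx.2⟩
  choose g hg1 hg2 using hne
  have hginj : Function.Injective g := by
    intro a b hab
    have := congrArg f hab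
    rwa [hg2, hg2] at this
  refine ⟨Set.range g, ?_, ?_, ?_, ?_⟩
  · rintro _ ⟨α, rfl⟩; exact hg1 α
  · rw [Cardinal.mk_range_eq _ hginj, Cardinal.mk_out]
  · rintro _ ⟨a, rfl⟩ _ ⟨b, rfl⟩ h
    rw [hg2, hg2] at h; rw [h]
  · ext α
    simp only [Set.mem_image, Set.mem_range, Set.mem_univ, iff_true]
    exact ⟨g α, ⟨α, rfl⟩, hg2 α⟩

lemma meet_set_nonempty (ρ lam : Cardinal) :
    { c | ∃ Q : Set (Set lam.out),
      (∀ q ∈ Q, #q = ρ) ∧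
      (∀ b : Set lam.out, #b = ρ → ∃ q ∈ Q, #(↥(b ∩ q)) = ρ) ∧
      #Q = c }.Nonempty := by
  refine ⟨_, {q : Set lam.out | #q = ρ}, fun q hq => hq, fun b hb => ⟨b, hb, ?_⟩, rfl⟩
  rw [Set.inter_self]; exact hb

lemma ds_set_nonempty (ρ lam : Cardinal) (hlam : ℵ₀ ≤ lam)
    (f : lam.out → ρ.out) :
    { c | ∃ Z : Set (Set lam.out),
      (∀ z ∈ Z, #z = ρ) ∧
      (∀ B : Set lam.out, (∀ α : ρ.out, #(↥(B ∩ f ⁻¹' {α})) = lam) →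
        ∃ z ∈ Z, #(↥(f '' (z ∩ B))) = ρ) ∧
      #Z = c }.Nonempty := by
  refine ⟨_, {z : Set lam.out | #z = ρ}, fun z hz => hz, fun B hB => ?_, rfl⟩
  obtain ⟨z, hzB, hz, _, him⟩ := aux_sel ρ lam hlam f B hB
  refine ⟨z, hz, ?_⟩
  rw [Set.inter_eq_self_of_subset_left hzB, him, Cardinal.mk_univ, Cardinal.mk_out]

theorem stmt0 (ρ lam : Cardinal) (hρ : ℵ₀ ≤ ρ) (hle : ρ ≤ lam) :
    DS ρ lam = meet ρ lam := by
  have hlam : ℵ₀ ≤ lam := hρ.trans hle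
  haveI : Nonempty ρ.out := by
    rw [← Cardinal.mk_ne_zero_iff, Cardinal.mk_out]
    exact (lt_of_lt_of_le aleph0_pos hρ).ne'
  apply le_antisymm
  · -- DS ≤ meet
    unfold DS
    refine ciSup_le fun f => ?_
    obtain ⟨Q, hQ1, hQ2, hQc⟩ := csInf_mem (meet_set_nonempty ρ lam)
    unfold ds
    refine csInf_le' ⟨Q, hQ1, ?_, hQc⟩
    intro B hB
    obtain ⟨z, hzB, hz, hinj, _⟩ := aux_sel ρ lam hlam f B hB
    obtain ⟨q, hqQ, hq⟩ := hQ2 z hz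
    refine ⟨q, hqQ, ?_⟩
    apply le_antisymm
    · calc #(↥(f '' (q ∩ B))) ≤ #(Set.univ : Set ρ.out) :=
            Cardinal.mk_le_mk_of_subset (Set.subset_univ _)
        _ = ρ := by rw [Cardinal.mk_univ, Cardinal.mk_out]
    · have h5 : f '' (z ∩ q) ⊆ f '' (q ∩ B) := Set.image_mono (f := f) (by
        rintro x ⟨hxz, hxq⟩; exact ⟨hxq, hzB hxz⟩)
      calc ρ = #(↥(z ∩ q)) := hq.symm
        _ = #(↥(f '' (z ∩ q))) :=
            (Cardinal.mk_image_eq_of_injOn _ _ (hinj.mono Set.inter_subset_left)).symm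
        _ ≤ _ := Cardinal.mk_le_mk_of_subset h5
  · -- meet ≤ DS
    have hcard : #((ρ.out × lam.out) × lam.out) = #lam.out := by
      rw [Cardinal.mk_prod, Cardinal.mk_prod]
      simp only [Cardinal.lift_id, Cardinal.mk_out]
      rw [Cardinal.mul_eq_max hρ hlam, max_eq_right hle, Cardinal.mul_eq_self hlam]
    obtain ⟨e⟩ := Cardinal.eq.mp hcard.symm
    set f : lam.out → ρ.out := fun x => (e x).1.1 with hf
    set d : lam.out → lam.out := fun x => (e x).1.2 with hd
    have key : ∀ (α : ρ.out) (y : lam.out), #(↥{x : lam.out | f x = α ∧ d x = y}) = lam := by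
      intro α y
      have heq : {x : lam.out | f x = α ∧ d x = y} ≃ lam.out :=
        { toFun := fun x => (e x.1).2
          invFun := fun w => ⟨e.symm ((α, y), w), by
            constructor <;> simp [hf, hd]⟩
          left_inv := by
            rintro ⟨x, hx1, hx2⟩
            apply Subtype.ext
            show e.symm ((α, y), (e x).2) = x
            have hpair : ((α, y), (e x).2) = e x := by
              simp only [hf] at hx1; simp only [hd] at hx2
              rw [Prod.ext_iff, Prod.ext_iff]
              exact ⟨⟨hx1.symm, hx2.symm⟩, rfl⟩
            rw [hpair, e.symm_apply_apply]
          right_inv := fun w => by simp }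
      rw [Cardinal.mk_congr heq, Cardinal.mk_out]
    have hmeet : meet ρ lam ≤ ds ρ lam f := by
      unfold ds
      refine le_csInf (ds_set_nonempty ρ lam hlam f) ?_
      rintro c ⟨Z, hZ1, hZ2, rfl⟩
      have hje : #ρ.out ≤ #lam.out := by rw [Cardinal.mk_out, Cardinal.mk_out]; exact hle
      obtain ⟨j⟩ := (Cardinal.le_def _ _).mp hje
      have hS0 : #(↥(Set.range j)) = ρ := by
        rw [Cardinal.mk_range_eq _ j.injective, Cardinal.mk_out]
      have hQ1 : ∀ q ∈ (fun z => d '' z ∪ Set.range j) '' Z, #q = ρ := by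
        rintro _ ⟨z, hz, rfl⟩
        apply le_antisymm
        · calc #(↥(d '' z ∪ Set.range j)) ≤ #(↥(d '' z)) + #(↥(Set.range ⇑j)) :=
              Cardinal.mk_union_le _ _
            _ ≤ ρ + ρ := add_le_add (le_of_le_of_eq Cardinal.mk_image_le (hZ1 z hz)) hS0.le
            _ = ρ := Cardinal.add_eq_self hρ
        · exact le_of_eq_of_le hS0.symm
            (Cardinal.mk_le_mk_of_subset Set.subset_union_right)
      have hQ2 : ∀ b : Set lam.out, #b = ρ →
          ∃ q ∈ (fun z => d '' z ∪ Set.range j) '' Z, #(↥(b ∩ q)) = ρ := by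
        intro b hb
        have hbe : #ρ.out = #(↥b) := by rw [Cardinal.mk_out, hb]
        obtain ⟨i⟩ := Cardinal.eq.mp hbe
        have hibinj : Function.Injective (fun α : ρ.out => (i α : lam.out)) :=
          fun a b h => i.injective (Subtype.ext h)
        have hBf : ∀ α : ρ.out,
            #(↥({x | d x = (i (f x) : lam.out)} ∩ f ⁻¹' {α})) = lam := by
          intro α
          have hEq : {x | d x = (i (f x) : lam.out)} ∩ f ⁻¹' {α}
              = {x : lam.out | f x = α ∧ d x = (i α : lam.out)} := by
            ext x
            simp only [Set.mem_inter_iff, Set.mem_setOf_eq, Set.mem_preimage,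
              Set.mem_singleton_iff]
            constructor
            · rintro ⟨h1, h2⟩; exact ⟨h2, by rw [← h2]; exact h1⟩
            · rintro ⟨h1, h2⟩; exact ⟨by rw [h1]; exact h2, h1⟩
          rw [hEq]; exact key α (i α : lam.out)
        obtain ⟨z, hzZ, hz⟩ := hZ2 _ hBf
        refine ⟨d '' z ∪ Set.range j, ⟨z, hzZ, rfl⟩, ?_⟩
        apply le_antisymm
        · exact le_of_le_of_eq (Cardinal.mk_le_mk_of_subset Set.inter_subset_left) hb
        · have hsub : (fun α : ρ.out => (i α : lam.out)) ''
              (f '' (z ∩ {x | d x = (i (f x) : lam.out)})) ⊆ b ∩ (d '' z ∪ Set.range j) := by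
            rintro _ ⟨_, ⟨x, ⟨hxz, hxB⟩, rfl⟩, rfl⟩
            exact ⟨(i (f x)).2, Or.inl ⟨x, hxz, hxB⟩⟩
          have h6 := Cardinal.mk_le_mk_of_subset hsub
          have h7 : #(↥((fun α : ρ.out => (i α : lam.out)) ''
              (f '' (z ∩ {x | d x = (i (f x) : lam.out)})))) = ρ := by
            rw [Cardinal.mk_image_eq hibinj]; exact hz
          exact le_of_eq_of_le h7.symm h6
      have h8 : meet ρ lam ≤ #(↥((fun z => d '' z ∪ Set.range ⇑j) '' Z)) := by
        unfold meet; exact csInf_le' ⟨_, hQ1, hQ2, rfl⟩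
      exact h8.trans Cardinal.mk_image_le
    exact hmeet.trans (le_ciSup (Cardinal.bddAbove_range _) f)
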